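/- Let I = ((x_1 x_2)^{w_1}, (x_2 x_3)^{w_2}, ..., (x_{n-1} x_n)^{w_{n-1}}) be the edge ideal of an edge-weighted path on n vertices with w_{n-1} = 1. Then for all t ≥ 2, (I^t : x_{n-1} x_n) = I^{t-1}. -/

import Mathlib

open MvPolynomial Pointwise

namespace PathColonAux

variable {m : ℕ}

/-- exponent vector of the `i`-th generator -/
noncomputable def e (w : Fin (m + 1) → ℕ) (i : Fin (m + 1)) : Fin (m + 2) →₀ ℕ :=
  w i • (Finsupp.single i.castSucc 1 + Finsupp.single i.succ 1)

/-- exponent vectors of products of `t` generators -/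
def D (w : Fin (m + 1) → ℕ) (t : ℕ) : Set (Fin (m + 2) →₀ ℕ) :=
  {d | ∃ c : Multiset (Fin (m + 1)), Multiset.card c = t ∧ (c.map (e w)).sum = d}

lemma gen_eq (K : Type) [Field K] (w : Fin (m + 1) → ℕ) (i : Fin (m + 1)) :
    (X i.castSucc * X i.succ : MvPolynomial (Fin (m + 2)) K) ^ w i =
      monomial (e w i) (1 : K) := by
  rw [X, X, monomial_mul, one_mul, monomial_pow, one_pow, e]

lemma pow_eq (K : Type) [Field K] (w : Fin (m + 1) → ℕ) (t : ℕ) :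
    (Ideal.span (Set.range fun i : Fin (m + 1) =>
      ((X i.castSucc * X i.succ) ^ w i : MvPolynomial (Fin (m + 2)) K))) ^ t =
      Ideal.span ((fun d => monomial d (1 : K)) '' D w t) := by
  induction t with
  | zero =>
    have hD : D w 0 = {0} := by
      ext d
      constructor
      · rintro ⟨c, hc, rfl⟩
        simp [Multiset.card_eq_zero.mp hc]
      · rintro rfl
        exact ⟨0, rfl, rfl⟩
    rw [hD, pow_zero]
    simp [Ideal.one_eq_top, Ideal.span_singleton_one]
  | succ t ih =>
    have hgen : (Set.range fun i : Fin (m + 1) =>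
        ((X i.castSucc * X i.succ) ^ w i : MvPolynomial (Fin (m + 2)) K)) =
        (fun d => monomial d (1 : K)) '' Set.range (e w) := by
      rw [show (fun i : Fin (m + 1) =>
          ((X i.castSucc * X i.succ) ^ w i : MvPolynomial (Fin (m + 2)) K)) =
          fun i => monomial (e w i) (1 : K) from funext (gen_eq K w), ← Set.range_comp]
      rfl
    have hset : ((fun d => monomial d (1 : K)) '' D w t : Set (MvPolynomial (Fin (m + 2)) K)) *
        ((fun d => monomial d (1 : K)) '' Set.range (e w)) =
        (fun d => monomial d (1 : K)) '' D w (t + 1) := by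
      ext p
      constructor
      · intro hp
        obtain ⟨q1, hq1, q2, hq2, rfl⟩ := Set.mem_mul.mp hp
        obtain ⟨d, ⟨c, hc, rfl⟩, rfl⟩ := hq1
        obtain ⟨d2, ⟨i, rfl⟩, rfl⟩ := hq2
        refine (Set.mem_image _ _ _).mpr ⟨(Multiset.map (e w) (i ::ₘ c)).sum,
          ⟨i ::ₘ c, by simp [hc], rfl⟩, ?_⟩
        simp [Multiset.map_cons, Multiset.sum_cons, monomial_mul, add_comm]
      · intro hp
        obtain ⟨d, ⟨c, hc, rfl⟩, rfl⟩ := hp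
        have hc0 : c ≠ 0 := by intro h; rw [h] at hc; simp at hc
        obtain ⟨i, hi⟩ := Multiset.exists_mem_of_ne_zero hc0
        obtain ⟨c', rfl⟩ := Multiset.exists_cons_of_mem hi
        refine Set.mem_mul.mpr ⟨monomial ((c'.map (e w)).sum) 1,
          Set.mem_image_of_mem _ ⟨c', by simpa using hc, rfl⟩,
          monomial (e w i) 1, Set.mem_image_of_mem _ ⟨i, rfl⟩, ?_⟩
        simp [Multiset.map_cons, Multiset.sum_cons, monomial_mul, add_comm]
    rw [pow_succ, ih, hgen, Ideal.span, Ideal.span, Ideal.span, Submodule.span_mul_span, hset]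

lemma sum_apply' (w : Fin (m + 1) → ℕ) (s : Multiset (Fin (m + 1))) (k : Fin (m + 2)) :
    ((s.map (e w)).sum) k = (s.map (fun i => e w i k)).sum := by
  induction s using Multiset.induction_on with
  | empty => simp
  | cons a s ih => simp [ih]

lemma key (w : Fin (m + 1) → ℕ) (hw : ∀ i, 1 ≤ w i) (hlast : w (Fin.last m) = 1)
    (t : ℕ) (ht : 1 ≤ t) (x : Fin (m + 2) →₀ ℕ) (c : Multiset (Fin (m + 1)))
    (hc : Multiset.card c = t)
    (hle : (c.map (e w)).sum ≤ x + e w (Fin.last m)) :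
    ∃ c' : Multiset (Fin (m + 1)),
      Multiset.card c' = t - 1 ∧ (c'.map (e w)).sum ≤ x := by
  set u : Fin (m + 2) := (Fin.last m).castSucc with hu
  set v : Fin (m + 2) := (Fin.last m).succ with hv
  have huv : u ≠ v := ne_of_lt Fin.castSucc_lt_succ
  have hlastval : e w (Fin.last m) = Finsupp.single u 1 + Finsupp.single v 1 := by
    rw [e, hlast, one_smul]
  by_cases hmem : Fin.last m ∈ c
  · obtain ⟨c', rfl⟩ := Multiset.exists_cons_of_mem hmem
    refine ⟨c', by simp at hc; omega, ?_⟩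
    rw [Multiset.map_cons, Multiset.sum_cons, Finsupp.le_def] at hle
    rw [Finsupp.le_def]
    intro k
    have h1 := hle k
    simp only [Finsupp.add_apply] at h1
    have h2 : (e w (Fin.last m)) k + ((c'.map (e w)).sum) k =
        x k + (e w (Fin.last m)) k → ((c'.map (e w)).sum) k ≤ x k := by omega
    omega
  · have hne : ∀ i ∈ c, i ≠ Fin.last m := fun i hi h => hmem (h ▸ hi)
    have hvz : ∀ i ∈ c, e w i v = 0 := by
      intro i hi
      have h1 : i.castSucc ≠ v := by
        rw [hv, Fin.succ_last]
        exact ne_of_lt (Fin.castSucc_lt_last i)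
      have h2 : i.succ ≠ v := fun h => hne i hi (Fin.succ_injective _ h)
      simp [e, Finsupp.single_apply, h1, h2]
    have hlu : (e w (Fin.last m)) u = 1 := by
      simp [hlastval, Finsupp.single_apply, huv, Ne.symm huv]
    have hlo : ∀ k, k ≠ u → k ≠ v → (e w (Fin.last m)) k = 0 := by
      intro k hk1 hk2
      simp [hlastval, Finsupp.single_apply, Ne.symm hk1, Ne.symm hk2]
    by_cases hex : ∃ j ∈ c, e w j u ≠ 0
    · obtain ⟨j, hj, hju⟩ := hex
      obtain ⟨c', rfl⟩ := Multiset.exists_cons_of_mem hj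
      refine ⟨c', by simp at hc; omega, ?_⟩
      rw [Finsupp.le_def]
      intro k
      have hk := Finsupp.le_def.mp hle k
      rw [Multiset.map_cons, Multiset.sum_cons] at hk
      simp only [Finsupp.add_apply] at hk
      by_cases hkv : k = v
      · subst hkv
        have : ((c'.map (e w)).sum) v = 0 := by
          rw [sum_apply']
          refine Multiset.sum_eq_zero ?_
          intro a ha
          obtain ⟨i, hi, rfl⟩ := Multiset.mem_map.mp ha
          exact hvz i (Multiset.mem_cons_of_mem hi)
        omega
      · by_cases hku : k = u
        · subst hku
          rw [hlu] at hk
          omega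
        · rw [hlo k hku hkv] at hk
          omega
    · push_neg at hex
      have hc0 : c ≠ 0 := by intro h; rw [h] at hc; simp at hc; omega
      obtain ⟨j, hj⟩ := Multiset.exists_mem_of_ne_zero hc0
      obtain ⟨c', rfl⟩ := Multiset.exists_cons_of_mem hj
      refine ⟨c', by simp at hc; omega, ?_⟩
      rw [Finsupp.le_def]
      intro k
      have hk := Finsupp.le_def.mp hle k
      rw [Multiset.map_cons, Multiset.sum_cons] at hk
      simp only [Finsupp.add_apply] at hk
      by_cases hkv : k = v
      · subst hkv
        have : ((c'.map (e w)).sum) v = 0 := by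
          rw [sum_apply']
          refine Multiset.sum_eq_zero ?_
          intro a ha
          obtain ⟨i, hi, rfl⟩ := Multiset.mem_map.mp ha
          exact hvz i (Multiset.mem_cons_of_mem hi)
        omega
      · by_cases hku : k = u
        · subst hku
          have : ((c'.map (e w)).sum) u = 0 := by
            rw [sum_apply']
            refine Multiset.sum_eq_zero ?_
            intro a ha
            obtain ⟨i, hi, rfl⟩ := Multiset.mem_map.mp ha
            exact hex i (Multiset.mem_cons_of_mem hi)
          omega
        · rw [hlo k hku hkv] at hk
          omega

end PathColonAux

/-- for the edge ideal of an edge-weighted path on `m+2` vertices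
with last edge weight `w_{n-1} = 1`, `(I^t : x_{n-1} x_n) = I^{t-1}` for `t ≥ 2`. -/
theorem path_colon_last_edge (K : Type) [Field K] (m : ℕ) (w : Fin (m + 1) → ℕ)
    (hw : ∀ i, 1 ≤ w i) (hlast : w (Fin.last m) = 1) (t : ℕ) (ht : 2 ≤ t)
    (I : Ideal (MvPolynomial (Fin (m + 2)) K))
    (hI : I = Ideal.span (Set.range fun i : Fin (m + 1) =>
      (X i.castSucc * X i.succ) ^ w i)) :
    (I ^ t).colon ((Ideal.span {X ((Fin.last m).castSucc) * X ((Fin.last m).succ)} :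
      Ideal (MvPolynomial (Fin (m + 2)) K)) : Set (MvPolynomial (Fin (m + 2)) K)) =
      I ^ (t - 1) := by
  have hf : (X ((Fin.last m).castSucc) * X ((Fin.last m).succ) :
      MvPolynomial (Fin (m + 2)) K) = monomial (PathColonAux.e w (Fin.last m)) 1 := by
    have h := PathColonAux.gen_eq K w (Fin.last m)
    rwa [hlast, pow_one] at h
  subst hI
  ext r
  rw [Ideal.mem_colon_span_singleton]
  constructor
  · intro h
    rw [PathColonAux.pow_eq K w t, hf] at h
    rw [PathColonAux.pow_eq K w (t - 1), mem_ideal_span_monomial_image]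
    intro xi hxi
    have hmem : xi + PathColonAux.e w (Fin.last m) ∈
        (r * monomial (PathColonAux.e w (Fin.last m)) (1 : K)).support := by
      rw [mem_support_iff, coeff_mul_monomial]
      simpa using mem_support_iff.mp hxi
    obtain ⟨d, ⟨c, hc, rfl⟩, hd⟩ := mem_ideal_span_monomial_image.mp h _ hmem
    obtain ⟨c', hc', hle⟩ := PathColonAux.key w hw hlast t (by omega) xi c hc hd
    exact ⟨_, ⟨c', hc', rfl⟩, hle⟩
  · intro h
    have hfmem : (X ((Fin.last m).castSucc) * X ((Fin.last m).succ) :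
        MvPolynomial (Fin (m + 2)) K) ∈ Ideal.span (Set.range fun i : Fin (m + 1) =>
          (X i.castSucc * X i.succ) ^ w i) := by
      apply Ideal.subset_span
      refine ⟨Fin.last m, ?_⟩
      show (X (Fin.last m).castSucc * X (Fin.last m).succ) ^ w (Fin.last m) = _
      rw [hlast, pow_one]
    have h2 := Ideal.mul_mem_mul h hfmem
    rwa [← pow_succ, show t - 1 + 1 = t by omega] at h2
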